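/- The element X := T_0 T_1 ⋯ T_n satisfies X T_i = T_{i+1} X for all 1 ≤ i ≤ n-2, and T_1 X² = X² T_{n-1}. -/
import Mathlib


/-- The ordered product `T a * T (a+1) * ⋯ * T b` (equal to `1` when `b < a`). -/
def upProd {G : Type*} [Monoid G] (T : ℕ → G) (a b : ℕ) : G :=
  ((List.range (b + 1 - a)).map fun k => T (a + k)).prod

section helpers
variable {G : Type*} [Monoid G] (T : ℕ → G)

lemma upProd_single (a : ℕ) : upProd T a a = T a := by
  simp [upProd, show a + 1 - a = 1 from by omega, List.range_succ]

lemma upProd_append {a b c : ℕ} (h1 : a ≤ b + 1) (h2 : b ≤ c) :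
    upProd T a b * upProd T (b + 1) c = upProd T a c := by
  unfold upProd
  rw [show c + 1 - (b + 1) = c - b from by omega,
    show c + 1 - a = (b + 1 - a) + (c - b) from by omega,
    List.range_add, List.map_append, List.prod_append, List.map_map]
  have hf : ((fun k => T (a + k)) ∘ fun x => b + 1 - a + x) = fun k => T (b + 1 + k) := by
    funext k
    simp only [Function.comp_apply]
    congr 1
    omega
  rw [hf]

lemma upProd_cons {a b : ℕ} (h : a ≤ b) : upProd T a b = T a * upProd T (a + 1) b := by
  rw [← upProd_append T (Nat.le_succ a) h, upProd_single]

lemma commute_upProd {a b : ℕ} (g : G) (h : ∀ k, a ≤ k → k ≤ b → Commute g (T k)) :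
    Commute g (upProd T a b) := by
  apply Commute.list_prod_right
  intro x hx
  simp only [List.mem_map, List.mem_range] at hx
  obtain ⟨k, hk, rfl⟩ := hx
  exact h _ (by omega) (by omega)

end helpers

/-- In the affine braid group of type `C⁽¹⁾`, the element `X = T_0 T_1 ⋯ T_n` satisfies
`X T_i = T_{i+1} X` for `1 ≤ i ≤ n-2`, and `T_1 X² = X² T_{n-1}`. -/
theorem X_shift_relations {G : Type*} [Group G] (n : ℕ) (hn : 2 ≤ n) (T : ℕ → G)
    (hbraid : ∀ i, 1 ≤ i → i ≤ n - 2 →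
      T i * T (i + 1) * T i = T (i + 1) * T i * T (i + 1))
    (hcomm : ∀ i j, i ≤ n → j ≤ n → i + 2 ≤ j → T i * T j = T j * T i)
    (hC0 : T 1 * T 0 * T 1 * T 0 = T 0 * T 1 * T 0 * T 1)
    (hCn : T (n - 1) * T n * T (n - 1) * T n = T n * T (n - 1) * T n * T (n - 1)) :
    (∀ i, 1 ≤ i → i ≤ n - 2 → upProd T 0 n * T i = T (i + 1) * upProd T 0 n) ∧
    T 1 * (upProd T 0 n) ^ 2 = (upProd T 0 n) ^ 2 * T (n - 1) := by
  -- Part 1: the shift relation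
  have shift : ∀ i, 1 ≤ i → i ≤ n - 2 → upProd T 0 n * T i = T (i + 1) * upProd T 0 n := by
    intro i hi1 hi2
    obtain ⟨j, rfl⟩ : ∃ j, i = j + 1 := ⟨i - 1, by omega⟩
    have hB : Commute (T (j + 1)) (upProd T (j + 3) n) := by
      apply commute_upProd
      intro k hk1 hk2
      exact hcomm (j + 1) k (by omega) hk2 (by omega)
    have hA : Commute (T (j + 2)) (upProd T 0 j) := by
      apply commute_upProd
      intro k hk1 hk2
      exact (hcomm k (j + 2) (by omega) (by omega) (by omega)).symm
    have hmid : (upProd T (j + 1) (j + 2) : G) = T (j + 1) * T (j + 2) := by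
      rw [upProd_cons T (by omega), upProd_single]
    have hX : upProd T 0 n = upProd T 0 j * (T (j + 1) * T (j + 2)) * upProd T (j + 3) n := by
      rw [← hmid, upProd_append T (show (0:ℕ) ≤ j + 1 from by omega)
          (show j ≤ j + 2 from by omega)]
      exact (upProd_append T (by omega) (by omega)).symm
    rw [hX]
    calc upProd T 0 j * (T (j+1) * T (j+2)) * upProd T (j+3) n * T (j+1)
        = upProd T 0 j * (T (j+1) * T (j+2) * T (j+1)) * upProd T (j+3) n := by
          rw [mul_assoc _ (upProd T (j+3) n), ← hB.eq]
          simp only [mul_assoc]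
      _ = upProd T 0 j * (T (j+2) * T (j+1) * T (j+2)) * upProd T (j+3) n := by
          rw [hbraid (j+1) (by omega) (by omega)]
      _ = T (j+2) * (upProd T 0 j * (T (j+1) * T (j+2)) * upProd T (j+3) n) := by
          rw [show upProd T 0 j * (T (j+2) * T (j+1) * T (j+2)) =
              T (j+2) * (upProd T 0 j * (T (j+1) * T (j+2))) from by
            rw [← mul_assoc, ← mul_assoc, ← hA.eq]
            simp only [mul_assoc]]
          simp only [mul_assoc]
  refine ⟨shift, ?_⟩
  -- Part 2: key telescoping induction
  have key : ∀ m k, n - 1 - k ≤ m → 1 ≤ k → k ≤ n - 1 →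
      T k * (upProd T (k + 1) n * upProd T k n)
        = upProd T (k + 1) n * upProd T k n * T (n - 1) := by
    intro m
    induction m with
    | zero =>
      intro k hm hk1 hk2
      have hk : k = n - 1 := by omega
      subst hk
      have h1 : upProd T (n - 1 + 1) n = T n := by
        rw [show n - 1 + 1 = n from by omega, upProd_single]
      have h2 : upProd T (n - 1) n = T (n - 1) * T n := by
        rw [upProd_cons T (show n - 1 ≤ n from by omega),
          show n - 1 + 1 = n from by omega, upProd_single]
      rw [h1, h2]
      simp only [mul_assoc] at hCn ⊢
      exact hCn
    | succ m ih =>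
      intro k hm hk1 hk2
      by_cases hcase : k = n - 1
      · subst hcase
        have h1 : upProd T (n - 1 + 1) n = T n := by
          rw [show n - 1 + 1 = n from by omega, upProd_single]
        have h2 : upProd T (n - 1) n = T (n - 1) * T n := by
          rw [upProd_cons T (show n - 1 ≤ n from by omega),
            show n - 1 + 1 = n from by omega, upProd_single]
        rw [h1, h2]
        simp only [mul_assoc] at hCn ⊢
        exact hCn
      · have hk2' : k + 1 ≤ n - 1 := by omega
        have hc2 : Commute (T k) (upProd T (k + 2) n) := by
          apply commute_upProd
          intro l hl1 hl2
          exact hcomm k l (by omega) hl2 (by omega)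
        have e1 : upProd T (k + 1) n = T (k + 1) * upProd T (k + 2) n :=
          upProd_cons T (by omega)
        have e2 : upProd T k n = T k * upProd T (k + 1) n :=
          upProd_cons T (by omega)
        calc T k * (upProd T (k+1) n * upProd T k n)
            = T k * (T (k+1) * upProd T (k+2) n * (T k * upProd T (k+1) n)) := by
              rw [← e1, ← e2]
          _ = (T k * T (k+1) * T k) * (upProd T (k+2) n * upProd T (k+1) n) := by
              simp only [mul_assoc]
              rw [show upProd T (k+2) n * (T k * upProd T (k+1) n)
                  = T k * (upProd T (k+2) n * upProd T (k+1) n) from by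
                rw [← mul_assoc, ← hc2.eq, mul_assoc]]
          _ = (T (k+1) * T k * T (k+1)) * (upProd T (k+2) n * upProd T (k+1) n) := by
              rw [hbraid k hk1 (by omega)]
          _ = T (k+1) * T k * (upProd T (k+2) n * upProd T (k+1) n * T (n-1)) := by
              rw [← ih (k + 1) (by omega) (by omega) hk2']
              simp only [mul_assoc]
          _ = T (k+1) * (T k * upProd T (k+2) n) * (upProd T (k+1) n * T (n-1)) := by
              simp only [mul_assoc]
          _ = T (k+1) * (upProd T (k+2) n * T k) * (upProd T (k+1) n * T (n-1)) := by
              rw [hc2.eq]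
          _ = (T (k+1) * upProd T (k+2) n) * (T k * upProd T (k+1) n) * T (n-1) := by
              simp only [mul_assoc]
          _ = upProd T (k+1) n * upProd T k n * T (n-1) := by rw [← e1, ← e2]
  -- assemble part 2
  have e0 : upProd T 0 n = T 0 * upProd T 1 n := upProd_cons T (by omega)
  have e1 : upProd T 1 n = T 1 * upProd T 2 n := upProd_cons T (by omega)
  have hc0 : Commute (T 0) (upProd T 2 n) := by
    apply commute_upProd
    intro l hl1 hl2
    exact hcomm 0 l (by omega) hl2 (by omega)
  have swap0 : ∀ z : G, upProd T 2 n * (T 0 * z) = T 0 * (upProd T 2 n * z) := by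
    intro z
    rw [← mul_assoc, ← hc0.eq, mul_assoc]
  have hC0' : ∀ z : G, T 1 * (T 0 * (T 1 * (T 0 * z))) = T 0 * (T 1 * (T 0 * (T 1 * z))) := by
    intro z
    calc T 1 * (T 0 * (T 1 * (T 0 * z))) = (T 1 * T 0 * T 1 * T 0) * z := by
          simp only [mul_assoc]
      _ = (T 0 * T 1 * T 0 * T 1) * z := by rw [hC0]
      _ = T 0 * (T 1 * (T 0 * (T 1 * z))) := by simp only [mul_assoc]
  have hkey2 : T 1 * (upProd T 2 n * (T 1 * upProd T 2 n))
      = upProd T 2 n * (T 1 * (upProd T 2 n * T (n - 1))) := by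
    have h := key (n - 2) 1 (by omega) le_rfl (by omega)
    rw [e1] at h
    simp only [mul_assoc] at h
    exact h
  simp only [pow_two, e0, e1, mul_assoc, swap0]
  rw [hC0', hkey2]
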